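/- Let λ₁, λ₂ : F^× → N be continuous group homomorphisms. There exists a continuous map Φ : GL_n(F) → N satisfying Φ(g·p) = Φ(g) + λ₁(det A_p) + λ₂(det D_p) for all g ∈ GL_n(F) and p ∈ P, and such that for every g ∈ GL_n(F) there exists c(g) ∈ N with Φ(g·g') = c(g) + Φ(g') for all g' ∈ GL_n(F), if and only if λ₁ = λ₂. (That is, the extension class b_{(λ₁,λ₂)} of ℤ by v_r(N) vanishes if and only if λ₁ = λ₂.) -/

import Mathlib

open Matrix

/-- The submodule of `Fin n → F` spanned by the first `r` standard basis vectors. -/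
def stdFlag (F : Type*) [Field F] (n r : ℕ) : Submodule F (Fin n → F) where
  carrier := {v | ∀ i : Fin n, r ≤ (i : ℕ) → v i = 0}
  add_mem' := fun {a b} ha hb i hi => by simp [ha i hi, hb i hi]
  zero_mem' := fun i _ => rfl
  smul_mem' := fun c {v} hv i hi => by simp [hv i hi]

/-- The block upper-triangularity condition cutting out the maximal parabolic of type
`(r, n-r)`: the `(i,j)` entry vanishes whenever `i ≥ r` and `j < r`. -/
def IsParMat {F : Type*} [Field F] {n : ℕ} (r : ℕ) (M : Matrix (Fin n) (Fin n) F) : Prop :=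
  ∀ i j : Fin n, r ≤ (i : ℕ) → (j : ℕ) < r → M i j = 0

lemma isParMat_iff_mapsTo {F : Type*} [Field F] {n r : ℕ} {M : Matrix (Fin n) (Fin n) F} :
    IsParMat r M ↔ ∀ v ∈ stdFlag F n r, M.mulVec v ∈ stdFlag F n r := by
  constructor
  · intro h v hv i hi
    simp only [Matrix.mulVec, dotProduct]
    refine Finset.sum_eq_zero fun j _ => ?_
    rcases lt_or_ge (j : ℕ) r with hj | hj
    · rw [h i j hi hj, zero_mul]
    · rw [hv j hj, mul_zero]
  · intro h i j hi hj
    have hmem : (Pi.single j (1 : F)) ∈ stdFlag F n r := by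
      intro k hk
      apply Pi.single_eq_of_ne
      intro hkj
      rw [hkj] at hk
      omega
    have h2 := h _ hmem i hi
    rw [Matrix.mulVec_single] at h2
    simpa using h2

/-- The maximal parabolic subgroup of `GL_n(F)` of type `(r, n-r)`: block upper-triangular
invertible matrices, i.e. the stabilizer of the span of the first `r` standard basis vectors. -/
def Parabolic (F : Type*) [Field F] (n r : ℕ) : Subgroup (GL (Fin n) F) where
  carrier := {g | IsParMat r (g : Matrix (Fin n) (Fin n) F)}
  one_mem' := by
    intro i j hi hj
    have hne : i ≠ j := by
      intro h; rw [h] at hi; omega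
    exact Matrix.one_apply_ne hne
  mul_mem' := by
    intro a b ha hb i j hi hj
    show ((a : Matrix (Fin n) (Fin n) F) * b) i j = 0
    rw [Matrix.mul_apply]
    refine Finset.sum_eq_zero fun k _ => ?_
    rcases lt_or_ge (k : ℕ) r with hk | hk
    · rw [ha i k hi hk, zero_mul]
    · rw [hb k j hk hj, mul_zero]
  inv_mem' := by
    intro g hg
    have hres : ∀ v ∈ stdFlag F n r,
        (Matrix.toLin' (g : Matrix (Fin n) (Fin n) F)) v ∈ stdFlag F n r := by
      intro v hv
      simpa [Matrix.toLin'_apply] using isParMat_iff_mapsTo.mp hg v hv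
    set f := (Matrix.toLin' (g : Matrix (Fin n) (Fin n) F)).restrict hres with hf
    have hginj : Function.Injective ((g : Matrix (Fin n) (Fin n) F).mulVec) :=
      Matrix.mulVec_injective_iff_isUnit.mpr ⟨g, rfl⟩
    have hinj : Function.Injective f := by
      intro x y hxy
      apply Subtype.ext
      apply hginj
      have h3 := congrArg Subtype.val hxy
      simpa [hf, LinearMap.restrict_apply, Matrix.toLin'_apply] using h3
    have hsurj := (LinearMap.injective_iff_surjective (f := f)).mp hinj
    rw [Set.mem_setOf_eq, isParMat_iff_mapsTo]
    intro v hv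
    obtain ⟨w, hw⟩ := hsurj ⟨v, hv⟩
    have hw' : (g : Matrix (Fin n) (Fin n) F).mulVec w.1 = v := by
      have h4 := congrArg Subtype.val hw
      simpa [hf, LinearMap.restrict_apply, Matrix.toLin'_apply] using h4
    have hcalc : ((g⁻¹ : GL (Fin n) F) : Matrix (Fin n) (Fin n) F).mulVec v = w.1 := by
      rw [← hw', Matrix.mulVec_mulVec, ← Units.val_mul, inv_mul_cancel, Units.val_one,
        Matrix.one_mulVec]
    rw [hcalc]
    exact w.2

/-- Identification of `Fin n` with `Fin r ⊕ Fin (n-r)`. -/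
def blockEquiv (n r : ℕ) (h : r ≤ n) : Fin r ⊕ Fin (n - r) ≃ Fin n :=
  finSumFinEquiv.trans (finCongr (Nat.add_sub_cancel' h))

/-- The upper-left `r × r` block `A_g` of a matrix `g ∈ GL_n(F)`. -/
def Ablock {F : Type*} [Field F] {n : ℕ} (r : ℕ) (h : r ≤ n) (g : GL (Fin n) F) :
    Matrix (Fin r) (Fin r) F :=
  Matrix.toBlocks₁₁
    ((g : Matrix (Fin n) (Fin n) F).submatrix (blockEquiv n r h) (blockEquiv n r h))

/-- The lower-right `(n-r) × (n-r)` block `D_g` of a matrix `g ∈ GL_n(F)`. -/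
def Dblock {F : Type*} [Field F] {n : ℕ} (r : ℕ) (h : r ≤ n) (g : GL (Fin n) F) :
    Matrix (Fin (n - r)) (Fin (n - r)) F :=
  Matrix.toBlocks₂₂
    ((g : Matrix (Fin n) (Fin n) F).submatrix (blockEquiv n r h) (blockEquiv n r h))

lemma isUnit_det_blocks {F : Type*} [Field F] {n r : ℕ} (h : r ≤ n) {g : GL (Fin n) F}
    (hg : g ∈ Parabolic F n r) :
    IsUnit (Ablock r h g).det ∧ IsUnit (Dblock r h g).det := by
  set M := (g : Matrix (Fin n) (Fin n) F).submatrix (blockEquiv n r h) (blockEquiv n r h)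
    with hM
  have h21 : M.toBlocks₂₁ = 0 := by
    ext i j
    show (g : Matrix (Fin n) (Fin n) F)
      (blockEquiv n r h (Sum.inr i)) (blockEquiv n r h (Sum.inl j)) = 0
    apply hg
    · show r ≤ ((blockEquiv n r h) (Sum.inr i) : ℕ)
      simp [blockEquiv]
    · show ((blockEquiv n r h) (Sum.inl j) : ℕ) < r
      simp [blockEquiv]
  have hdet : (g : Matrix (Fin n) (Fin n) F).det = (Ablock r h g).det * (Dblock r h g).det := by
    have h1 : M.det = (g : Matrix (Fin n) (Fin n) F).det :=
      Matrix.det_submatrix_equiv_self _ _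
    have h2 : M = Matrix.fromBlocks M.toBlocks₁₁ M.toBlocks₁₂ 0 M.toBlocks₂₂ := by
      rw [← h21]
      exact (Matrix.fromBlocks_toBlocks M).symm
    rw [← h1]
    conv_lhs => rw [h2]
    rw [Matrix.det_fromBlocks_zero₂₁]
    rfl
  have hu : IsUnit ((g : Matrix (Fin n) (Fin n) F).det) :=
    (Matrix.isUnit_iff_isUnit_det _).mp ⟨g, rfl⟩
  rw [hdet] at hu
  constructor
  · exact isUnit_of_mul_isUnit_left hu
  · rw [mul_comm] at hu
    exact isUnit_of_mul_isUnit_left hu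

/-- The determinant of the upper-left block of an element of `P`, as a unit of `F`. -/
noncomputable def AblockDetUnit {F : Type*} [Field F] {n r : ℕ} (h : r ≤ n)
    (g : GL (Fin n) F) (hg : g ∈ Parabolic F n r) : Fˣ :=
  ((isUnit_det_blocks h hg).1).unit

/-- The determinant of the lower-right block of an element of `P`, as a unit of `F`. -/
noncomputable def DblockDetUnit {F : Type*} [Field F] {n r : ℕ} (h : r ≤ n)
    (g : GL (Fin n) F) (hg : g ∈ Parabolic F n r) : Fˣ :=
  ((isUnit_det_blocks h hg).2).unit

section AuxLemmas

variable {F : Type*} [Field F] {n r : ℕ}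

lemma blockEquiv_inl_val (h : r ≤ n) (i : Fin r) :
    ((blockEquiv n r h) (Sum.inl i) : ℕ) = (i : ℕ) := by simp [blockEquiv]

lemma blockEquiv_inr_val (h : r ≤ n) (j : Fin (n - r)) :
    ((blockEquiv n r h) (Sum.inr j) : ℕ) = r + (j : ℕ) := by simp [blockEquiv]

/-- The diagonal matrix with `u` at position `k` and `1` elsewhere, as a unit. -/
noncomputable def diagUnit (u : Fˣ) (k : Fin n) : GL (Fin n) F :=
  { val := Matrix.diagonal (fun i => if i = k then (u : F) else 1)
    inv := Matrix.diagonal (fun i => if i = k then ((u⁻¹ : Fˣ) : F) else 1)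
    val_inv := by
      have hfun : (fun i : Fin n => (if i = k then (u : F) else 1) *
          (if i = k then ((u⁻¹ : Fˣ) : F) else 1)) = fun _ => 1 := by
        funext i
        by_cases hik : i = k <;> simp [hik]
      rw [Matrix.diagonal_mul_diagonal, hfun, Matrix.diagonal_one]
    inv_val := by
      have hfun : (fun i : Fin n => (if i = k then ((u⁻¹ : Fˣ) : F) else 1) *
          (if i = k then (u : F) else 1)) = fun _ => 1 := by
        funext i
        by_cases hik : i = k <;> simp [hik]
      rw [Matrix.diagonal_mul_diagonal, hfun, Matrix.diagonal_one] }

lemma diagUnit_mem (u : Fˣ) (k : Fin n) : diagUnit u k ∈ Parabolic F n r := by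
  intro i j hi hj
  have hne : i ≠ j := by
    intro hij
    rw [hij] at hi
    omega
  exact Matrix.diagonal_apply_ne _ hne

lemma Ablock_diagUnit (h : r ≤ n) (u : Fˣ) (k : Fin n) :
    Ablock r h (diagUnit u k) =
      Matrix.diagonal
        (fun i : Fin r => if blockEquiv n r h (Sum.inl i) = k then (u : F) else 1) := by
  show ((Matrix.diagonal fun i => if i = k then (u : F) else 1).submatrix
      (blockEquiv n r h) (blockEquiv n r h)).toBlocks₁₁ = _
  rw [Matrix.submatrix_diagonal_equiv, Matrix.toBlocks₁₁_diagonal]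
  rfl

lemma Dblock_diagUnit (h : r ≤ n) (u : Fˣ) (k : Fin n) :
    Dblock r h (diagUnit u k) =
      Matrix.diagonal
        (fun j : Fin (n - r) => if blockEquiv n r h (Sum.inr j) = k then (u : F) else 1) := by
  show ((Matrix.diagonal fun i => if i = k then (u : F) else 1).submatrix
      (blockEquiv n r h) (blockEquiv n r h)).toBlocks₂₂ = _
  rw [Matrix.submatrix_diagonal_equiv, Matrix.toBlocks₂₂_diagonal]
  rfl

lemma det_Ablock_diagUnit_single (h : r ≤ n) (u : Fˣ) {k : Fin n} (hk : (k : ℕ) = 0)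
    (hr : 0 < r) : (Ablock r h (diagUnit u k)).det = (u : F) := by
  rw [Ablock_diagUnit, Matrix.det_diagonal]
  have h0 : ∀ i : Fin r, i ≠ ⟨0, hr⟩ →
      (if blockEquiv n r h (Sum.inl i) = k then (u : F) else 1) = 1 := by
    intro i hi
    rw [if_neg]
    intro hc
    apply hi
    have hv := congrArg Fin.val hc
    rw [blockEquiv_inl_val, hk] at hv
    exact Fin.ext hv
  rw [Finset.prod_eq_single (⟨0, hr⟩ : Fin r) (fun i _ hi => h0 i hi)
    (fun habs => absurd (Finset.mem_univ _) habs)]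
  rw [if_pos]
  apply Fin.ext
  rw [blockEquiv_inl_val, hk]

lemma det_Dblock_diagUnit_one (h : r ≤ n) (u : Fˣ) {k : Fin n} (hk : (k : ℕ) < r) :
    (Dblock r h (diagUnit u k)).det = 1 := by
  rw [Dblock_diagUnit, Matrix.det_diagonal]
  apply Finset.prod_eq_one
  intro j _
  rw [if_neg]
  intro hc
  have hv := congrArg Fin.val hc
  rw [blockEquiv_inr_val] at hv
  omega

lemma det_Ablock_diagUnit_one (h : r ≤ n) (u : Fˣ) {k : Fin n} (hk : r ≤ (k : ℕ)) :
    (Ablock r h (diagUnit u k)).det = 1 := by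
  rw [Ablock_diagUnit, Matrix.det_diagonal]
  apply Finset.prod_eq_one
  intro i _
  rw [if_neg]
  intro hc
  have hv := congrArg Fin.val hc
  rw [blockEquiv_inl_val] at hv
  have := i.isLt
  omega

lemma det_Dblock_diagUnit_single (h : r ≤ n) (u : Fˣ) {k : Fin n} (hk : (k : ℕ) = r)
    (hrn : r < n) : (Dblock r h (diagUnit u k)).det = (u : F) := by
  have hnr : 0 < n - r := by omega
  rw [Dblock_diagUnit, Matrix.det_diagonal]
  have h0 : ∀ j : Fin (n - r), j ≠ ⟨0, hnr⟩ →
      (if blockEquiv n r h (Sum.inr j) = k then (u : F) else 1) = 1 := by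
    intro j hj
    rw [if_neg]
    intro hc
    apply hj
    have hv := congrArg Fin.val hc
    rw [blockEquiv_inr_val, hk] at hv
    apply Fin.ext
    show (j : ℕ) = 0
    omega
  rw [Finset.prod_eq_single (⟨0, hnr⟩ : Fin (n - r)) (fun j _ hj => h0 j hj)
    (fun habs => absurd (Finset.mem_univ _) habs)]
  rw [if_pos]
  apply Fin.ext
  rw [blockEquiv_inr_val, hk]
  simp

lemma permMatrix_sq (a b : Fin n) :
    ((Equiv.swap a b).permMatrix F) * ((Equiv.swap a b).permMatrix F) = 1 := by
  show ((Equiv.swap a b).toPEquiv.toMatrix : Matrix (Fin n) (Fin n) F) *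
      (Equiv.swap a b).toPEquiv.toMatrix = 1
  rw [← PEquiv.toMatrix_trans, ← Equiv.toPEquiv_trans]
  have hswap : (Equiv.swap a b).trans (Equiv.swap a b) = Equiv.refl (Fin n) := by
    ext x
    simp [Equiv.swap_apply_self]
  rw [hswap, Equiv.toPEquiv_refl, PEquiv.toMatrix_refl]

/-- The permutation matrix of the transposition `(a b)`, as a unit. -/
def swapUnit (a b : Fin n) : GL (Fin n) F :=
  { val := (Equiv.swap a b).permMatrix F
    inv := (Equiv.swap a b).permMatrix F
    val_inv := permMatrix_sq a b
    inv_val := permMatrix_sq a b }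

lemma permMatrix_apply (a b : Fin n) (i j : Fin n) :
    ((Equiv.swap a b).permMatrix F) i j = if Equiv.swap a b i = j then 1 else 0 := by
  show (Equiv.swap a b).toPEquiv.toMatrix i j = _
  rw [PEquiv.toMatrix_apply, Equiv.toPEquiv_apply]
  simp [eq_comm]

lemma swapUnit_mul_diagUnit (a b : Fin n) (u : Fˣ) :
    (swapUnit a b : GL (Fin n) F) * diagUnit u a = diagUnit u b * swapUnit a b := by
  apply Units.ext
  show ((Equiv.swap a b).permMatrix F) * Matrix.diagonal (fun i => if i = a then (u : F) else 1)
      = Matrix.diagonal (fun i => if i = b then (u : F) else 1) * (Equiv.swap a b).permMatrix F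
  ext i j
  rw [Matrix.mul_diagonal, Matrix.diagonal_mul, permMatrix_apply]
  by_cases hij : Equiv.swap a b i = j
  · rw [if_pos hij, one_mul, mul_one, ← hij]
    have hiff : Equiv.swap a b i = a ↔ i = b := by
      rw [Equiv.apply_eq_iff_eq_symm_apply, Equiv.symm_swap, Equiv.swap_apply_left]
    by_cases hib : i = b
    · rw [if_pos (hiff.mpr hib), if_pos hib]
    · rw [if_neg (fun hc => hib (hiff.mp hc)), if_neg hib]
  · rw [if_neg hij, zero_mul, mul_zero]

lemma det_par {g : GL (Fin n) F} (h : r ≤ n) (hg : g ∈ Parabolic F n r) :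
    ((g : Matrix (Fin n) (Fin n) F)).det = (Ablock r h g).det * (Dblock r h g).det := by
  set M := (g : Matrix (Fin n) (Fin n) F).submatrix (blockEquiv n r h) (blockEquiv n r h)
    with hM
  have h21 : M.toBlocks₂₁ = 0 := by
    ext i j
    show (g : Matrix (Fin n) (Fin n) F)
      (blockEquiv n r h (Sum.inr i)) (blockEquiv n r h (Sum.inl j)) = 0
    apply hg
    · show r ≤ ((blockEquiv n r h) (Sum.inr i) : ℕ)
      simp [blockEquiv]
    · show ((blockEquiv n r h) (Sum.inl j) : ℕ) < r
      simp [blockEquiv]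
  have h1 : M.det = (g : Matrix (Fin n) (Fin n) F).det :=
    Matrix.det_submatrix_equiv_self _ _
  have h2 : M = Matrix.fromBlocks M.toBlocks₁₁ M.toBlocks₁₂ 0 M.toBlocks₂₂ := by
    rw [← h21]
    exact (Matrix.fromBlocks_toBlocks M).symm
  rw [← h1]
  conv_lhs => rw [h2]
  rw [Matrix.det_fromBlocks_zero₂₁]
  rfl

lemma AblockDetUnit_val (h : r ≤ n) (g : GL (Fin n) F) (hg : g ∈ Parabolic F n r) :
    ((AblockDetUnit h g hg : Fˣ) : F) = (Ablock r h g).det :=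
  IsUnit.unit_spec _

lemma DblockDetUnit_val (h : r ≤ n) (g : GL (Fin n) F) (hg : g ∈ Parabolic F n r) :
    ((DblockDetUnit h g hg : Fˣ) : F) = (Dblock r h g).det :=
  IsUnit.unit_spec _

end AuxLemmas

/-- For continuous homomorphisms `λ₁, λ₂ : F^× → N`, the extension class
`b_{(λ₁,λ₂)}` of `ℤ` by `v_r(N)` is split — i.e. there is a continuous `Φ : GL_n(F) → N`
with `Φ(g·p) = Φ(g) + λ₁(det A_p) + λ₂(det D_p)` whose left translates differ from `Φ` by
constants — if and only if `λ₁ = λ₂`. -/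
theorem extension_class_vanishes_iff_eq
    {F : Type*} [NontriviallyNormedField F] [IsUltrametricDist F]
    [CompleteSpace F] [LocallyCompactSpace F]
    {n r : ℕ} (hn : 2 ≤ n) (hr : 0 < r) (hrn : r < n)
    {N : Type*} [AddCommGroup N] [TopologicalSpace N] [IsTopologicalAddGroup N]
    (l₁ l₂ : Fˣ → N) (h₁c : Continuous l₁) (h₁ : ∀ a b : Fˣ, l₁ (a * b) = l₁ a + l₁ b)
    (h₂c : Continuous l₂) (h₂ : ∀ a b : Fˣ, l₂ (a * b) = l₂ a + l₂ b) :
    (∃ Φ : GL (Fin n) F → N, Continuous Φ ∧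
      (∀ (g p : GL (Fin n) F) (hp : p ∈ Parabolic F n r),
        Φ (g * p) = Φ g + l₁ (AblockDetUnit hrn.le p hp) + l₂ (DblockDetUnit hrn.le p hp)) ∧
      (∀ g : GL (Fin n) F, ∃ c : N, ∀ g' : GL (Fin n) F, Φ (g * g') = c + Φ g')) ↔
    l₁ = l₂ := by
  constructor
  · rintro ⟨Φ, hΦc, hP, hL⟩
    funext u
    have hl₁1 : l₁ 1 = 0 := by
      have h := h₁ 1 1
      rw [mul_one] at h
      exact (left_eq_add.mp h)
    have hl₂1 : l₂ 1 = 0 := by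
      have h := h₂ 1 1
      rw [mul_one] at h
      exact (left_eq_add.mp h)
    have hn0 : (0 : ℕ) < n := by omega
    set p0 : Fin n := ⟨0, hn0⟩ with hp0
    set pr : Fin n := ⟨r, hrn⟩ with hpr
    have hAd : AblockDetUnit hrn.le (diagUnit u p0) (diagUnit_mem u p0) = u := by
      apply Units.ext
      rw [AblockDetUnit_val]
      exact det_Ablock_diagUnit_single hrn.le u rfl hr
    have hDd : DblockDetUnit hrn.le (diagUnit u p0) (diagUnit_mem u p0) = 1 := by
      apply Units.ext
      rw [DblockDetUnit_val, Units.val_one]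
      exact det_Dblock_diagUnit_one hrn.le u hr
    have hAd' : AblockDetUnit hrn.le (diagUnit u pr) (diagUnit_mem u pr) = 1 := by
      apply Units.ext
      rw [AblockDetUnit_val, Units.val_one]
      exact det_Ablock_diagUnit_one hrn.le u le_rfl
    have hDd' : DblockDetUnit hrn.le (diagUnit u pr) (diagUnit_mem u pr) = u := by
      apply Units.ext
      rw [DblockDetUnit_val]
      exact det_Dblock_diagUnit_single hrn.le u rfl hrn
    obtain ⟨c, hc⟩ := hL (diagUnit u pr)
    have h1 : Φ (diagUnit u pr) = Φ 1 + l₂ u := by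
      have h := hP 1 (diagUnit u pr) (diagUnit_mem u pr)
      rw [one_mul, hAd', hDd', hl₁1, add_zero] at h
      exact h
    have hc1 := hc 1
    rw [mul_one, h1] at hc1
    have hcval : l₂ u = c := by
      rw [add_comm c] at hc1
      exact add_left_cancel hc1
    have hWd := hP (swapUnit p0 pr) (diagUnit u p0) (diagUnit_mem u p0)
    rw [hAd, hDd, hl₂1, add_zero, swapUnit_mul_diagUnit, hc (swapUnit p0 pr)] at hWd
    rw [add_comm c] at hWd
    have hfin : c = l₁ u := add_left_cancel hWd
    exact (hcval.trans hfin).symm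
  · intro hl
    subst hl
    refine ⟨fun g => l₁ (Matrix.GeneralLinearGroup.det g), ?_, ?_, ?_⟩
    · apply h₁c.comp
      rw [Units.continuous_iff]
      constructor
      · exact Units.continuous_val.matrix_det
      · exact Units.continuous_coe_inv.matrix_det
    · intro g p hp
      have hdet : Matrix.GeneralLinearGroup.det p =
          AblockDetUnit hrn.le p hp * DblockDetUnit hrn.le p hp := by
        apply Units.ext
        rw [Units.val_mul, AblockDetUnit_val, DblockDetUnit_val,
          Matrix.GeneralLinearGroup.val_det_apply]
        exact det_par hrn.le hp
      show l₁ (Matrix.GeneralLinearGroup.det (g * p)) = _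
      rw [_root_.map_mul, hdet, h₁, h₁, add_assoc]
    · intro g
      exact ⟨l₁ (Matrix.GeneralLinearGroup.det g), fun g' => by
        show l₁ (Matrix.GeneralLinearGroup.det (g * g')) = _
        rw [_root_.map_mul, h₁]⟩
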